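/- (Double Kummer congruence.) Let p be a prime, let c ∈ ℕ with c ≥ 2 and gcd(c,p) = 1, let l_1, l_2 ∈ ℕ with l_j ≥ 1, and let m_1, m_2, n_1, n_2 ∈ ℕ₀ satisfy m_j ≡ n_j (mod (p−1)p^{l_j−1}) for j = 1, 2. For k_1, k_2 ∈ ℕ₀ define the rational number A(k_1,k_2) := Σ_{ν=0}^{k_2} C(k_2,ν)·(1 − p^{k_1+ν})·(1 − c^{k_1+ν+1})·(1 − c^{k_2−ν+1})·(B_{k_1+ν+1}·B_{k_2−ν+1})/((k_1+ν+1)(k_2−ν+1))·p^{k_2−ν}. Then there exists t ∈ ℚ whose denominator is coprime to p such that A(m_1,m_2) − A(n_1,n_2) = p^{min(l_1,l_2)}·t. -/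

import Mathlib

/-- The rational number
`A(k₁,k₂) = Σ_{ν=0}^{k₂} C(k₂,ν)·(1 − p^{k₁+ν})·(1 − c^{k₁+ν+1})·(1 − c^{k₂−ν+1})
  ·(B_{k₁+ν+1}·B_{k₂−ν+1})/((k₁+ν+1)(k₂−ν+1))·p^{k₂−ν}`. -/
noncomputable def doubleKummerSum (p c k₁ k₂ : ℕ) : ℚ :=
  ∑ ν ∈ Finset.range (k₂ + 1),
    (k₂.choose ν : ℚ) * (1 - (p : ℚ) ^ (k₁ + ν)) * (1 - (c : ℚ) ^ (k₁ + ν + 1)) *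
      (1 - (c : ℚ) ^ (k₂ - ν + 1)) *
      (bernoulli (k₁ + ν + 1) * bernoulli (k₂ - ν + 1)) /
        (((k₁ : ℚ) + ν + 1) * ((k₂ : ℚ) - ν + 1)) *
      (p : ℚ) ^ (k₂ - ν)

open Finset Filter Topology
set_option linter.unusedSectionVars false

namespace DKC

variable (p c : ℕ) [hp : Fact p.Prime]

/-- untruncated twisted Bernoulli value, integral over all of ℤ_p -/
noncomputable def Ifun' (m : ℕ) : ℚ := (1 - (c : ℚ) ^ (m + 1)) * bernoulli (m + 1) / (m + 1)

/-- twisted Bernoulli value with Euler factor -/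
noncomputable def Ifun (m : ℕ) : ℚ :=
  (1 - (p : ℚ) ^ m) * (1 - (c : ℚ) ^ (m + 1)) * bernoulli (m + 1) / (m + 1)

def rr (N a : ℕ) : ℕ := c * a % p ^ N
def qq (N a : ℕ) : ℕ := c * a / p ^ N

/-- Riemann sum over all of ℤ_p -/
noncomputable def Jp (m N : ℕ) : ℚ_[p] :=
  -∑ a ∈ range (p ^ N), ((rr p c N a : ℚ_[p]) ^ m * (qq p c N a : ℚ_[p]))

/-- Riemann sum over units -/
noncomputable def Ju (m N : ℕ) : ℚ_[p] :=
  -∑ a ∈ (range (p ^ N)).filter (fun a => ¬ p ∣ a),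
    ((rr p c N a : ℚ_[p]) ^ m * (qq p c N a : ℚ_[p]))

lemma nat_binom (r s k : ℕ) : ∃ z : ℕ,
    (r + s) ^ (k + 1) = r ^ (k + 1) + (k + 1) * r ^ k * s + s ^ 2 * z := by
  induction k with
  | zero => exact ⟨0, by ring⟩
  | succ k ih =>
      obtain ⟨z, hz⟩ := ih
      exact ⟨(k + 1) * r ^ k + z * (r + s), by rw [pow_succ, hz]; ring⟩

lemma rr_qq_spec (N a : ℕ) : p ^ N * qq p c N a + rr p c N a = c * a :=
  Nat.div_add_mod _ _

/-- reindexing sums by multiplication by the unit `c` -/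
lemma sum_rr {M : Type*} [AddCommMonoid M] (hcp : c.Coprime p) (N : ℕ) (hN : 1 ≤ N)
    (g : ℕ → M) : ∑ a ∈ range (p ^ N), g (rr p c N a) = ∑ a ∈ range (p ^ N), g a := by
  have hpN : 1 < p ^ N := Nat.one_lt_pow (by omega) hp.out.one_lt
  obtain ⟨d, -, hd⟩ := Nat.exists_mul_mod_eq_one_of_coprime (hcp.pow_right N) hpN
  have hmod : ∀ u v : ℕ, u * v % p ^ N = 1 → ∀ a < p ^ N, v * (u * a % p ^ N) % p ^ N = a := by
    intro u v huv a ha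
    have h1 : v * (u * a % p ^ N) ≡ v * (u * a) [MOD p ^ N] := (Nat.mod_modEq _ _).mul_left v
    have h2 : v * (u * a) ≡ a [MOD p ^ N] := by
      calc v * (u * a) = u * v * a := by ring
        _ ≡ 1 * a [MOD p ^ N] := Nat.ModEq.mul_right a
            (by unfold Nat.ModEq; rw [Nat.one_mod_eq_one.mpr (by omega), huv])
        _ = a := one_mul a
    calc v * (u * a % p ^ N) % p ^ N = a % p ^ N := h1.trans h2
      _ = a := Nat.mod_eq_of_lt ha
  refine Finset.sum_nbij' (i := fun a => c * a % p ^ N) (j := fun b => d * b % p ^ N)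
    (fun a _ => mem_range.mpr (Nat.mod_lt _ (by omega))) 
    (fun b _ => mem_range.mpr (Nat.mod_lt _ (by omega))) ?_ ?_ ?_
  · intro a ha
    exact hmod c d hd a (mem_range.mp ha)
  · intro b hb
    exact hmod d c (by rwa [mul_comm] at hd) b (mem_range.mp hb)
  · intro a _
    rfl

/-- the fundamental twisting identity -/
lemma twist (hcp : c.Coprime p) (m N : ℕ) (hN : 1 ≤ N) : ∃ Z : ℕ,
    ((c : ℚ_[p]) ^ (m + 1) - 1) * (∑ a ∈ range (p ^ N), (a : ℚ_[p]) ^ (m + 1)) =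
      (m + 1 : ℚ_[p]) * (p : ℚ_[p]) ^ N *
        (∑ a ∈ range (p ^ N), ((rr p c N a : ℚ_[p]) ^ m * (qq p c N a : ℚ_[p]))) +
      (p : ℚ_[p]) ^ (2 * N) * (Z : ℚ_[p]) := by
  classical
  refine ⟨∑ a ∈ range (p ^ N),
    (qq p c N a) ^ 2 * (nat_binom (rr p c N a) (p ^ N * qq p c N a) m).choose, ?_⟩
  have key : ∀ a ∈ range (p ^ N), (c * a) ^ (m + 1)
      = rr p c N a ^ (m + 1) + (m + 1) * p ^ N * (rr p c N a ^ m * qq p c N a)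
        + p ^ (2 * N) * (qq p c N a ^ 2 *
            (nat_binom (rr p c N a) (p ^ N * qq p c N a) m).choose) := by
    intro a _
    have h1 := (nat_binom (rr p c N a) (p ^ N * qq p c N a) m).choose_spec
    have h2 : rr p c N a + p ^ N * qq p c N a = c * a := by
      rw [add_comm]; exact rr_qq_spec p c N a
    calc (c * a) ^ (m + 1) = (rr p c N a + p ^ N * qq p c N a) ^ (m + 1) := by rw [h2]
      _ = _ := h1
      _ = _ := by ring
  have hnat : c ^ (m + 1) * (∑ a ∈ range (p ^ N), a ^ (m + 1))
      = (∑ a ∈ range (p ^ N), a ^ (m + 1))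
        + (m + 1) * p ^ N * (∑ a ∈ range (p ^ N), rr p c N a ^ m * qq p c N a)
        + p ^ (2 * N) * (∑ a ∈ range (p ^ N), qq p c N a ^ 2 *
            (nat_binom (rr p c N a) (p ^ N * qq p c N a) m).choose) :=
    calc c ^ (m + 1) * (∑ a ∈ range (p ^ N), a ^ (m + 1))
        = ∑ a ∈ range (p ^ N), (c * a) ^ (m + 1) := by
          rw [Finset.mul_sum]; exact Finset.sum_congr rfl (fun a _ => (mul_pow c a (m + 1)).symm)
      _ = ∑ a ∈ range (p ^ N), (rr p c N a ^ (m + 1)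
            + (m + 1) * p ^ N * (rr p c N a ^ m * qq p c N a)
            + p ^ (2 * N) * (qq p c N a ^ 2 *
                (nat_binom (rr p c N a) (p ^ N * qq p c N a) m).choose)) :=
          Finset.sum_congr rfl key
      _ = _ := by
          rw [Finset.sum_add_distrib, Finset.sum_add_distrib, ← Finset.mul_sum, ← Finset.mul_sum,
            sum_rr p c hcp N hN (fun x => x ^ (m + 1))]
  have hcast := congrArg (fun n : ℕ => (n : ℚ_[p])) hnat
  push_cast at hcast
  push_cast
  linear_combination hcast

/-- error bound constant in Faulhaber approximations -/
noncomputable def Cb (e : ℕ) : ℝ :=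
  ∑ j ∈ range e, ‖((bernoulli j * ((e + 1).choose j) / (e + 1) : ℚ) : ℚ_[p])‖

lemma faul (e N : ℕ) (he : 1 ≤ e) : ∃ E : ℚ_[p], ‖E‖ ≤ Cb p e ∧
    ∑ a ∈ range (p ^ N), (a : ℚ_[p]) ^ e =
      ((bernoulli e : ℚ) : ℚ_[p]) * (p : ℚ_[p]) ^ N + (p : ℚ_[p]) ^ (2 * N) * E := by
  have hp1 : ‖(p : ℚ_[p])‖ ≤ 1 := by
    rw [Padic.norm_p]
    exact inv_le_one_of_one_le₀ (by exact_mod_cast hp.out.one_le)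
  refine ⟨∑ j ∈ range e, ((bernoulli j * ((e + 1).choose j) / (e + 1) : ℚ) : ℚ_[p]) *
      (p : ℚ_[p]) ^ (N * (e - 1 - j)), ?_, ?_⟩
  · refine (norm_sum_le _ _).trans ?_
    unfold Cb
    refine Finset.sum_le_sum fun j _ => ?_
    rw [norm_mul]
    calc _ ≤ ‖((bernoulli j * ((e + 1).choose j) / (e + 1) : ℚ) : ℚ_[p])‖ * 1 := by
            gcongr
            rw [norm_pow]
            exact pow_le_one₀ (norm_nonneg _) hp1
      _ = _ := mul_one _
  · have h := congrArg (fun q : ℚ => (q : ℚ_[p])) (sum_range_pow (p ^ N) e)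
    simp only [Rat.cast_sum] at h
    push_cast at h
    rw [h, Finset.sum_range_succ]
    have htop : ((bernoulli e : ℚ) : ℚ_[p]) * ((e + 1).choose e) * ((p : ℚ_[p]) ^ N) ^ (e + 1 - e) /
        ((e : ℚ_[p]) + 1) = ((bernoulli e : ℚ) : ℚ_[p]) * (p : ℚ_[p]) ^ N := by
      rw [Nat.choose_succ_self_right, Nat.add_sub_cancel_left, pow_one]
      have he1 : ((e : ℚ_[p]) + 1) ≠ 0 := by
        exact_mod_cast (Nat.cast_add_one_ne_zero e : ((e : ℚ_[p]) + 1) ≠ 0)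
      push_cast
      field_simp
    have herr : (∑ x ∈ Finset.range e, ((bernoulli x : ℚ) : ℚ_[p]) * ((e + 1).choose x : ℚ_[p]) *
          ((p : ℚ_[p]) ^ N) ^ (e + 1 - x) / ((e : ℚ_[p]) + 1))
        = (p : ℚ_[p]) ^ (2 * N) * ∑ j ∈ Finset.range e,
            ((bernoulli j * ((e + 1).choose j) / (e + 1) : ℚ) : ℚ_[p]) *
              (p : ℚ_[p]) ^ (N * (e - 1 - j)) := by
      rw [Finset.mul_sum]
      refine Finset.sum_congr rfl fun j hj => ?_
      have hj' : j < e := mem_range.mp hj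
      have hsplit : e + 1 - j = 2 + (e - 1 - j) := by omega
      push_cast
      rw [← pow_mul, hsplit, Nat.mul_add, pow_add]
      ring
    rw [htop, herr]
    ring

lemma norm_nat_le_one (n : ℕ) : ‖(n : ℚ_[p])‖ ≤ 1 := by
  have := Padic.norm_int_le_one (p := p) (n : ℤ)
  push_cast at this
  exact this

lemma tendsto_Jp (hcp : c.Coprime p) (m : ℕ) :
    Tendsto (fun N => Jp p c m N) atTop (𝓝 ((Ifun' c m : ℚ_[p]))) := by
  rw [← tendsto_sub_nhds_zero_iff]
  set M : ℝ := (‖(c : ℚ_[p]) ^ (m + 1) - 1‖ * Cb p (m + 1) + 1) * ‖((m : ℚ_[p]) + 1)⁻¹‖ with hM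
  apply squeeze_zero_norm' (a := fun N => M * ((p : ℝ)⁻¹) ^ N)
  · filter_upwards [eventually_ge_atTop 1] with N hN
    obtain ⟨Z, hZ⟩ := twist p c hcp m N hN
    obtain ⟨E, hE, hEq⟩ := faul p (m + 1) N (by omega)
    have hme : ((m : ℚ_[p]) + 1) ≠ 0 := Nat.cast_add_one_ne_zero m
    have hpne : (p : ℚ_[p]) ≠ 0 := Nat.cast_ne_zero.mpr hp.out.pos.ne'
    have hI2 : ((m : ℚ_[p]) + 1) * ((Ifun' c m : ℚ) : ℚ_[p])
        = (1 - (c : ℚ_[p]) ^ (m + 1)) * ((bernoulli (m + 1) : ℚ) : ℚ_[p]) := by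
      unfold Ifun'
      push_cast
      field_simp
    set X : ℚ_[p] := (Z : ℚ_[p]) - ((c : ℚ_[p]) ^ (m + 1) - 1) * E with hX
    have key2 : ((m : ℚ_[p]) + 1) * (Jp p c m N - ((Ifun' c m : ℚ) : ℚ_[p]))
        = (p : ℚ_[p]) ^ N * X := by
      have hcancel : (p : ℚ_[p]) ^ N * (((m : ℚ_[p]) + 1) *
            (Jp p c m N - ((Ifun' c m : ℚ) : ℚ_[p])))
          = (p : ℚ_[p]) ^ N * ((p : ℚ_[p]) ^ N * X) := by
        unfold Jp
        rw [hX]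
        have hmul : ((m : ℚ_[p]) + 1) * ((Ifun' c m : ℚ) : ℚ_[p]) * (p : ℚ_[p]) ^ N
            = (1 - (c : ℚ_[p]) ^ (m + 1)) * ((bernoulli (m + 1) : ℚ) : ℚ_[p]) *
              (p : ℚ_[p]) ^ N := by rw [hI2]
        push_cast at hZ hEq hmul ⊢
        linear_combination hZ - ((c : ℚ_[p]) ^ (m + 1) - 1) * hEq - hmul
      exact mul_left_cancel₀ (pow_ne_zero N hpne) hcancel
    have key : Jp p c m N - ((Ifun' c m : ℚ) : ℚ_[p])
        = (p : ℚ_[p]) ^ N * X * ((m : ℚ_[p]) + 1)⁻¹ := by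
      field_simp
      linear_combination key2
    rw [key]
    have hXnorm : ‖X‖ ≤ ‖(c : ℚ_[p]) ^ (m + 1) - 1‖ * Cb p (m + 1) + 1 := by
      refine (norm_sub_le _ _).trans ?_
      rw [add_comm]
      gcongr
      · rw [norm_mul]
        exact mul_le_mul_of_nonneg_left hE (norm_nonneg _)
      · exact norm_nat_le_one p Z
    rw [norm_mul, norm_mul, Padic.norm_p_pow]
    have h1 : ((p : ℝ) ^ (-N : ℤ)) = ((p : ℝ)⁻¹) ^ N := by
      rw [zpow_neg, zpow_natCast, ← inv_pow]
    rw [h1, hM]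
    have hppos : (0 : ℝ) < (p : ℝ) := by exact_mod_cast hp.out.pos
    have hp0 : (0 : ℝ) < ((p : ℝ)⁻¹) ^ N := by positivity
    calc ((p : ℝ)⁻¹) ^ N * ‖X‖ * ‖((m : ℚ_[p]) + 1)⁻¹‖
        ≤ ((p : ℝ)⁻¹) ^ N * (‖(c : ℚ_[p]) ^ (m + 1) - 1‖ * Cb p (m + 1) + 1) *
          ‖((m : ℚ_[p]) + 1)⁻¹‖ := by gcongr
      _ = _ := by ring
  · have hlt : (p : ℝ)⁻¹ < 1 :=
      inv_lt_one_of_one_lt₀ (by exact_mod_cast hp.out.one_lt)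
    simpa using
      (tendsto_pow_atTop_nhds_zero_of_lt_one (by positivity) hlt).const_mul M

lemma Ju_eq (m N : ℕ) (hN : 1 ≤ N) :
    Ju p c m N = Jp p c m N - (p : ℚ_[p]) ^ m * Jp p c m (N - 1) := by
  have hpN : p ^ N = p * p ^ (N - 1) := by
    conv_lhs => rw [show N = (N - 1) + 1 by omega]
    rw [pow_succ']
  have hmult : ∑ a ∈ (range (p ^ N)).filter (fun a => p ∣ a),
      ((rr p c N a : ℚ_[p]) ^ m * (qq p c N a : ℚ_[p]))
      = (p : ℚ_[p]) ^ m * ∑ b ∈ range (p ^ (N - 1)),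
        ((rr p c (N - 1) b : ℚ_[p]) ^ m * (qq p c (N - 1) b : ℚ_[p])) := by
    rw [Finset.mul_sum]
    refine Finset.sum_nbij' (i := fun a => a / p) (j := fun b => p * b) ?_ ?_ ?_ ?_ ?_
    · intro a ha
      simp only [mem_filter, mem_range] at ha
      obtain ⟨ha1, t, rfl⟩ := ha
      rw [Nat.mul_div_cancel_left t hp.out.pos]
      refine mem_range.mpr ?_
      rw [hpN] at ha1
      exact lt_of_mul_lt_mul_left ha1 (Nat.zero_le p)
    · intro b hb
      simp only [mem_range] at hb
      simp only [mem_filter, mem_range]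
      exact ⟨by rw [hpN]; exact (mul_lt_mul_iff_right₀ hp.out.pos).mpr hb, ⟨b, rfl⟩⟩
    · intro a ha
      simp only [mem_filter] at ha
      exact Nat.mul_div_cancel' ha.2
    · intro b _
      exact Nat.mul_div_cancel_left b hp.out.pos
    · intro a ha
      simp only [mem_filter, mem_range] at ha
      obtain ⟨ha1, t, rfl⟩ := ha
      rw [Nat.mul_div_cancel_left t hp.out.pos]
      have h1 : rr p c N (p * t) = p * rr p c (N - 1) t := by
        unfold rr
        rw [hpN, show c * (p * t) = p * (c * t) by ring, Nat.mul_mod_mul_left]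
      have h2 : qq p c N (p * t) = qq p c (N - 1) t := by
        unfold qq
        rw [hpN, show c * (p * t) = p * (c * t) by ring,
          Nat.mul_div_mul_left _ _ hp.out.pos]
      rw [h1, h2]
      push_cast
      ring
  have hall := Finset.sum_filter_add_sum_filter_not (range (p ^ N)) (fun a => p ∣ a)
      (fun a => (rr p c N a : ℚ_[p]) ^ m * (qq p c N a : ℚ_[p]))
  unfold Ju Jp
  rw [eq_sub_of_add_eq' hall, hmult]
  ring

lemma tendsto_Ju (hcp : c.Coprime p) (m : ℕ) :
    Tendsto (fun N => Ju p c m N) atTop (𝓝 ((Ifun p c m : ℚ_[p]))) := by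
  have h1 := tendsto_Jp p c hcp m
  have h2 : Tendsto (fun N => Jp p c m (N - 1)) atTop (𝓝 ((Ifun' c m : ℚ_[p]))) :=
    h1.comp (tendsto_sub_atTop_nat 1)
  have h3 : Tendsto (fun N => Jp p c m N - (p : ℚ_[p]) ^ m * Jp p c m (N - 1)) atTop
      (𝓝 (((Ifun' c m : ℚ) : ℚ_[p]) - (p : ℚ_[p]) ^ m * ((Ifun' c m : ℚ) : ℚ_[p]))) :=
    h1.sub (h2.const_mul _)
  have h4 : ((Ifun p c m : ℚ) : ℚ_[p])
      = ((Ifun' c m : ℚ) : ℚ_[p]) - (p : ℚ_[p]) ^ m * ((Ifun' c m : ℚ) : ℚ_[p]) := by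
    unfold Ifun Ifun'
    push_cast
    ring
  rw [h4]
  refine h3.congr' ?_
  filter_upwards [eventually_ge_atTop 1] with N hN
  exact (Ju_eq p c m N hN).symm

/-- the double Riemann sum -/
noncomputable def D2 (k₁ k₂ N : ℕ) : ℚ_[p] :=
  ∑ a ∈ (range (p ^ N)).filter (fun a => ¬ p ∣ a), ∑ b ∈ range (p ^ N),
    (qq p c N a : ℚ_[p]) * (qq p c N b : ℚ_[p]) *
      ((rr p c N a : ℕ) ^ k₁ * ((rr p c N a : ℕ) + p * rr p c N b) ^ k₂ : ℕ)

lemma D2_eq (k₁ k₂ N : ℕ) :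
    ∑ ν ∈ range (k₂ + 1), ((k₂.choose ν : ℚ_[p]) * (p : ℚ_[p]) ^ (k₂ - ν) *
      (Ju p c (k₁ + ν) N * Jp p c (k₂ - ν) N)) = D2 p c k₁ k₂ N := by
  have step1 : ∀ ν : ℕ, (Ju p c (k₁ + ν) N * Jp p c (k₂ - ν) N)
      = ∑ a ∈ (range (p ^ N)).filter (fun a => ¬ p ∣ a), ∑ b ∈ range (p ^ N),
          ((rr p c N a : ℚ_[p]) ^ (k₁ + ν) * (qq p c N a : ℚ_[p])) *
            ((rr p c N b : ℚ_[p]) ^ (k₂ - ν) * (qq p c N b : ℚ_[p])) := by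
    intro ν
    unfold Ju Jp
    rw [neg_mul_neg, Finset.sum_mul_sum]
  calc ∑ ν ∈ range (k₂ + 1), ((k₂.choose ν : ℚ_[p]) * (p : ℚ_[p]) ^ (k₂ - ν) *
      (Ju p c (k₁ + ν) N * Jp p c (k₂ - ν) N))
      = ∑ ν ∈ range (k₂ + 1), ∑ a ∈ (range (p ^ N)).filter (fun a => ¬ p ∣ a),
          ∑ b ∈ range (p ^ N), ((k₂.choose ν : ℚ_[p]) * (p : ℚ_[p]) ^ (k₂ - ν) *
            (((rr p c N a : ℚ_[p]) ^ (k₁ + ν) * (qq p c N a : ℚ_[p])) *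
              ((rr p c N b : ℚ_[p]) ^ (k₂ - ν) * (qq p c N b : ℚ_[p])))) := by
        refine Finset.sum_congr rfl fun ν _ => ?_
        rw [step1 ν, Finset.mul_sum]
        refine Finset.sum_congr rfl fun a _ => ?_
        rw [Finset.mul_sum]
    _ = ∑ a ∈ (range (p ^ N)).filter (fun a => ¬ p ∣ a), ∑ ν ∈ range (k₂ + 1),
          ∑ b ∈ range (p ^ N), ((k₂.choose ν : ℚ_[p]) * (p : ℚ_[p]) ^ (k₂ - ν) *
            (((rr p c N a : ℚ_[p]) ^ (k₁ + ν) * (qq p c N a : ℚ_[p])) *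
              ((rr p c N b : ℚ_[p]) ^ (k₂ - ν) * (qq p c N b : ℚ_[p])))) := Finset.sum_comm
    _ = ∑ a ∈ (range (p ^ N)).filter (fun a => ¬ p ∣ a), ∑ b ∈ range (p ^ N),
          ∑ ν ∈ range (k₂ + 1), ((k₂.choose ν : ℚ_[p]) * (p : ℚ_[p]) ^ (k₂ - ν) *
            (((rr p c N a : ℚ_[p]) ^ (k₁ + ν) * (qq p c N a : ℚ_[p])) *
              ((rr p c N b : ℚ_[p]) ^ (k₂ - ν) * (qq p c N b : ℚ_[p])))) :=
        Finset.sum_congr rfl fun a _ => Finset.sum_comm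
    _ = D2 p c k₁ k₂ N := by
        unfold D2
        refine Finset.sum_congr rfl fun a _ => Finset.sum_congr rfl fun b _ => ?_
        push_cast
        rw [add_pow]
        simp only [Finset.mul_sum]
        refine Finset.sum_congr rfl fun ν hν => ?_
        ring

lemma euler_pow (x : ℕ) (hx : ¬ p ∣ x) {l : ℕ} (hl : 1 ≤ l) {m n : ℕ}
    (h : m ≡ n [MOD (p - 1) * p ^ (l - 1)]) : x ^ m ≡ x ^ n [MOD p ^ l] := by
  have hφ : (p ^ l).totient = (p - 1) * p ^ (l - 1) := by
    rw [Nat.totient_prime_pow hp.out (by omega), mul_comm]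
  have hcop : x.Coprime (p ^ l) :=
    (((Nat.Prime.coprime_iff_not_dvd hp.out).mpr hx).symm).pow_right l
  have key : ∀ m' n' : ℕ, n' ≤ m' → m' ≡ n' [MOD (p - 1) * p ^ (l - 1)] →
      x ^ m' ≡ x ^ n' [MOD p ^ l] := by
    intro m' n' hnm hmn
    obtain ⟨s, hs⟩ := (Nat.modEq_iff_dvd' hnm).mp hmn.symm
    have hm : m' = n' + (p ^ l).totient * s := by rw [hφ]; omega
    calc x ^ m' = x ^ n' * (x ^ (p ^ l).totient) ^ s := by rw [hm, pow_add, pow_mul]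
      _ ≡ x ^ n' * 1 ^ s [MOD p ^ l] := ((Nat.ModEq.pow_totient hcop).pow s).mul_left _
      _ = x ^ n' := by rw [one_pow, mul_one]
  rcases le_total n m with h' | h'
  · exact key m n h' h
  · exact (key n m h' h.symm).symm

lemma dks_eq (hc : 2 ≤ c) (k₁ k₂ : ℕ) :
    doubleKummerSum p c k₁ k₂ =
      ∑ ν ∈ range (k₂ + 1), ((k₂.choose ν : ℚ) * (p : ℚ) ^ (k₂ - ν) *
        (Ifun p c (k₁ + ν) * Ifun' c (k₂ - ν))) := by
  unfold doubleKummerSum Ifun Ifun'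
  refine Finset.sum_congr rfl fun ν hν => ?_
  have hν' : ν ≤ k₂ := Nat.lt_succ_iff.mp (mem_range.mp hν)
  have h1 : ((k₂ - ν : ℕ) : ℚ) = (k₂ : ℚ) - ν := by
    push_cast [Nat.cast_sub hν']
    ring
  have hX : ((k₁ : ℚ) + ν + 1) ≠ 0 := by positivity
  have hY : ((k₂ : ℚ) - ν + 1) ≠ 0 := by
    rw [← h1]
    positivity
  push_cast [Nat.cast_sub hν']
  field_simp

end DKC

open DKC

/-- Double Kummer congruence: if `m_j ≡ n_j (mod (p−1)p^{l_j−1})` for `j = 1,2`, then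
`A(m₁,m₂) ≡ A(n₁,n₂) (mod p^{min(l₁,l₂)})` as `p`-integral rationals. -/
theorem double_kummer_congruence (p : ℕ) (hp : p.Prime) (c : ℕ) (hc : 2 ≤ c)
    (hcp : Nat.Coprime c p) (l₁ l₂ : ℕ) (hl₁ : 1 ≤ l₁) (hl₂ : 1 ≤ l₂)
    (m₁ m₂ n₁ n₂ : ℕ)
    (h₁ : m₁ ≡ n₁ [MOD (p - 1) * p ^ (l₁ - 1)])
    (h₂ : m₂ ≡ n₂ [MOD (p - 1) * p ^ (l₂ - 1)]) :
    ∃ t : ℚ, t.den.Coprime p ∧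
      doubleKummerSum p c m₁ m₂ - doubleKummerSum p c n₁ n₂ = (p : ℚ) ^ (min l₁ l₂) * t := by
  haveI : Fact p.Prime := ⟨hp⟩
  set L := min l₁ l₂ with hL
  set Δ : ℚ := doubleKummerSum p c m₁ m₂ - doubleKummerSum p c n₁ n₂ with hΔ
  have hppos : (0 : ℝ) < (p : ℝ) := by exact_mod_cast hp.pos
  -- Step A : convergence of the double Riemann sums
  have hA : ∀ k₁ k₂ : ℕ, Tendsto (fun N => ∑ ν ∈ Finset.range (k₂ + 1),
      ((k₂.choose ν : ℚ_[p]) * (p : ℚ_[p]) ^ (k₂ - ν) *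
        (Ju p c (k₁ + ν) N * Jp p c (k₂ - ν) N))) atTop
      (𝓝 ((doubleKummerSum p c k₁ k₂ : ℚ_[p]))) := by
    intro k₁ k₂
    have hcast : ((doubleKummerSum p c k₁ k₂ : ℚ) : ℚ_[p])
        = ∑ ν ∈ Finset.range (k₂ + 1), ((k₂.choose ν : ℚ_[p]) * (p : ℚ_[p]) ^ (k₂ - ν) *
            (((Ifun p c (k₁ + ν) : ℚ) : ℚ_[p]) * ((Ifun' c (k₂ - ν) : ℚ) : ℚ_[p]))) := by
      rw [dks_eq p c hc k₁ k₂]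
      push_cast
      rfl
    rw [hcast]
    refine tendsto_finset_sum _ fun ν _ => Tendsto.const_mul _ ?_
    exact (tendsto_Ju p c hcp (k₁ + ν)).mul (tendsto_Jp p c hcp (k₂ - ν))
  set Φ : ℕ → ℚ_[p] := fun N =>
    (∑ ν ∈ Finset.range (m₂ + 1), ((m₂.choose ν : ℚ_[p]) * (p : ℚ_[p]) ^ (m₂ - ν) *
      (Ju p c (m₁ + ν) N * Jp p c (m₂ - ν) N))) -
    (∑ ν ∈ Finset.range (n₂ + 1), ((n₂.choose ν : ℚ_[p]) * (p : ℚ_[p]) ^ (n₂ - ν) *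
      (Ju p c (n₁ + ν) N * Jp p c (n₂ - ν) N))) with hΦ
  have hTend : Tendsto Φ atTop (𝓝 ((Δ : ℚ_[p]))) := by
    have h := (hA m₁ m₂).sub (hA n₁ n₂)
    have : ((Δ : ℚ) : ℚ_[p]) = ((doubleKummerSum p c m₁ m₂ : ℚ) : ℚ_[p]) -
        ((doubleKummerSum p c n₁ n₂ : ℚ) : ℚ_[p]) := by
      rw [hΔ]; push_cast; ring
    rw [this]
    exact h
  -- Step B : ultrametric bound
  have hbound : ∀ᶠ N in atTop, ‖Φ N‖ ≤ (p : ℝ) ^ (-(L : ℤ)) := by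
    filter_upwards [eventually_ge_atTop 1] with N hN
    have hzpos : (0 : ℝ) < (p : ℝ) ^ (-(L : ℤ)) := by positivity
    rw [hΦ]
    simp only []
    rw [D2_eq p c m₁ m₂ N, D2_eq p c n₁ n₂ N]
    unfold D2
    rw [← Finset.sum_sub_distrib]
    refine IsUltrametricDist.norm_sum_le_of_forall_le_of_nonneg hzpos.le fun a ha => ?_
    rw [← Finset.sum_sub_distrib]
    refine IsUltrametricDist.norm_sum_le_of_forall_le_of_nonneg hzpos.le fun b hb => ?_
    -- the key congruence per lattice point
    simp only [Finset.mem_filter, Finset.mem_range] at ha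
    set x := rr p c N a with hx
    set y := rr p c N b with hy
    have hpc : ¬ p ∣ c := (hp.coprime_iff_not_dvd).mp hcp.symm
    have hxu : ¬ p ∣ x := by
      intro hdx
      have hca : p ∣ c * a := by
        rw [← rr_qq_spec p c N a]
        exact dvd_add ((dvd_pow_self p (by omega : N ≠ 0)).mul_right _) hdx
      rcases (Nat.Prime.dvd_mul hp).mp hca with h | h
      · exact hpc h
      · exact ha.2 h
    have hwu : ¬ p ∣ x + p * y := by
      intro hdw
      exact hxu ((Nat.dvd_add_iff_left (dvd_mul_right p y)).mpr hdw)
    have e1 : x ^ m₁ ≡ x ^ n₁ [MOD p ^ L] :=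
      (euler_pow p x hxu hl₁ h₁).of_dvd (pow_dvd_pow p (min_le_left l₁ l₂))
    have e2 : (x + p * y) ^ m₂ ≡ (x + p * y) ^ n₂ [MOD p ^ L] :=
      (euler_pow p (x + p * y) hwu hl₂ h₂).of_dvd (pow_dvd_pow p (min_le_right l₁ l₂))
    have hmod : x ^ m₁ * (x + p * y) ^ m₂ ≡ x ^ n₁ * (x + p * y) ^ n₂ [MOD p ^ L] := e1.mul e2
    have hdvd : ((p : ℤ) ^ L) ∣ ((x ^ m₁ * (x + p * y) ^ m₂ : ℕ) : ℤ)
        - ((x ^ n₁ * (x + p * y) ^ n₂ : ℕ) : ℤ) := by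
      have h6 := hmod.dvd
      push_cast at h6 ⊢
      exact dvd_sub_comm.mp h6
    have hXnorm : ‖((x ^ m₁ * (x + p * y) ^ m₂ : ℕ) : ℚ_[p])
        - ((x ^ n₁ * (x + p * y) ^ n₂ : ℕ) : ℚ_[p])‖ ≤ (p : ℝ) ^ (-(L : ℤ)) := by
      have h5 : ((x ^ m₁ * (x + p * y) ^ m₂ : ℕ) : ℚ_[p])
          - ((x ^ n₁ * (x + p * y) ^ n₂ : ℕ) : ℚ_[p])
          = ((((x ^ m₁ * (x + p * y) ^ m₂ : ℕ) : ℤ)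
              - ((x ^ n₁ * (x + p * y) ^ n₂ : ℕ) : ℤ) : ℤ) : ℚ_[p]) := by push_cast; ring
      rw [h5]
      exact (Padic.norm_int_le_pow_iff_dvd _ _).mpr hdvd
    calc ‖(qq p c N a : ℚ_[p]) * (qq p c N b : ℚ_[p]) * ((x ^ m₁ * (x + p * y) ^ m₂ : ℕ) : ℚ_[p])
          - (qq p c N a : ℚ_[p]) * (qq p c N b : ℚ_[p]) * ((x ^ n₁ * (x + p * y) ^ n₂ : ℕ) : ℚ_[p])‖
        = ‖(qq p c N a : ℚ_[p]) * (qq p c N b : ℚ_[p])‖ *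
            ‖((x ^ m₁ * (x + p * y) ^ m₂ : ℕ) : ℚ_[p])
              - ((x ^ n₁ * (x + p * y) ^ n₂ : ℕ) : ℚ_[p])‖ := by
          rw [← mul_sub, norm_mul]
      _ ≤ 1 * ((p : ℝ) ^ (-(L : ℤ))) := by
          refine mul_le_mul ?_ hXnorm (norm_nonneg _) zero_le_one
          rw [norm_mul]
          exact mul_le_one₀ (norm_nat_le_one p _) (norm_nonneg _) (norm_nat_le_one p _)
      _ = (p : ℝ) ^ (-(L : ℤ)) := one_mul _
  have hnorm : ‖((Δ : ℚ) : ℚ_[p])‖ ≤ (p : ℝ) ^ (-(L : ℤ)) := le_of_tendsto hTend.norm hbound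
  -- Step C : extraction of the p-integral witness
  have hpq : (p : ℚ) ≠ 0 := Nat.cast_ne_zero.mpr hp.pos.ne'
  refine ⟨Δ / (p : ℚ) ^ L, ?_, by rw [mul_comm, div_mul_cancel₀ Δ (pow_ne_zero L hpq)]⟩
  set t : ℚ := Δ / (p : ℚ) ^ L with ht
  have htnorm : ‖(t : ℚ_[p])‖ ≤ 1 := by
    have hcast : ((t : ℚ) : ℚ_[p]) = ((Δ : ℚ) : ℚ_[p]) / (p : ℚ_[p]) ^ L := by
      rw [ht]; push_cast; ring
    rw [hcast, norm_div, Padic.norm_p_pow]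
    rw [div_le_one (by positivity)]
    simpa using hnorm
  rcases (Nat.coprime_or_dvd_of_prime hp t.den) with hcop | hdvd
  · exact hcop.symm
  exfalso
  have hnum : ¬ (p : ℤ) ∣ t.num := by
    intro hd
    have h1 : p ∣ t.num.natAbs := by
      have := Int.natAbs_dvd_natAbs.mpr hd
      simpa using this
    have h2 : p ∣ 1 := t.reduced ▸ Nat.dvd_gcd h1 hdvd
    exact hp.ne_one (Nat.dvd_one.mp h2)
  have hden0 : (t.den : ℚ_[p]) ≠ 0 := Nat.cast_ne_zero.mpr t.den_nz
  have heq : (t : ℚ_[p]) = (t.num : ℚ_[p]) / (t.den : ℚ_[p]) := by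
    conv_lhs => rw [← Rat.num_div_den t]
    push_cast
    ring
  have hnum1 : ‖(t.num : ℚ_[p])‖ = 1 :=
    le_antisymm (Padic.norm_int_le_one _)
      (not_lt.mp fun hlt => hnum ((Padic.norm_intCast_lt_one_iff).mp hlt))
  have hden1 : ‖(t.den : ℚ_[p])‖ < 1 := by
    have h7 := (Padic.norm_intCast_lt_one_iff (k := (t.den : ℤ))).mpr (Int.natCast_dvd_natCast.mpr hdvd)
    exact_mod_cast h7
  rw [heq, norm_div, hnum1] at htnorm
  have hdpos : 0 < ‖(t.den : ℚ_[p])‖ := norm_pos_iff.mpr hden0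
  rw [div_le_one hdpos] at htnorm
  linarith
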